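/- Let λ_1, λ_2 ∈ ℂ be nonzero with λ := λ_1λ_2, and suppose M satisfies conditions (*) and (**). Then MC_{λ_2}(MC_{λ_1}(M)) is isomorphic to MC_λ(M) as representations of the free group F_r: there exists a ℂ-linear isomorphism T from the underlying space of MC_{λ_2}(MC_{λ_1}(M)) to the underlying space of MC_λ(M) such that T conjugates the k-th component of MC_{λ_2}(MC_{λ_1}(M)) to the k-th component of MC_λ(M) for every k = 1,…,r. -/

import Mathlib

open Module LinearMap Submodule

/-- The coefficient endomorphism appearing in the `k`-th row of the convolution
operator `N_k`. -/
noncomputable def convCoeff {V : Type*} [AddCommGroup V] [Module ℂ V] {r : ℕ}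
    (M : Fin r → Module.End ℂ V) (lam : ℂ) (k i : Fin r) : Module.End ℂ V :=
  if i < k then M i - 1 else if i = k then lam • M k else lam • (M i - 1)

/-- The convolution operator `N_k` on `V^r`: it leaves every component `v_j` with
`j ≠ k` unchanged and replaces the `k`-th component by
`(M_1 − 1)v_1 + ⋯ + (M_{k−1} − 1)v_{k−1} + λ M_k v_k + λ(M_{k+1} − 1)v_{k+1} + ⋯ + λ(M_r − 1)v_r`. -/
noncomputable def convOp {V : Type*} [AddCommGroup V] [Module ℂ V] {r : ℕ}
    (M : Fin r → Module.End ℂ V) (lam : ℂ) (k : Fin r) :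
    Module.End ℂ (Fin r → V) :=
  LinearMap.pi fun j =>
    if j = k then ∑ i : Fin r, convCoeff M lam k i ∘ₗ LinearMap.proj i
    else LinearMap.proj j

/-- The subspace `K_k = {(0,…,0,u,0,…,0)ᵀ : u ∈ ker(M_k − 1)}` (`u` in the `k`-th slot). -/
noncomputable def Ksub {V : Type*} [AddCommGroup V] [Module ℂ V] {r : ℕ}
    (M : Fin r → Module.End ℂ V) (k : Fin r) : Submodule ℂ (Fin r → V) :=
  Submodule.pi Set.univ fun j => if j = k then LinearMap.ker (M k - 1) else ⊥

/-- The subspace `L = ⋂_k ker(N_k − 1)`. -/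
noncomputable def Lsub {V : Type*} [AddCommGroup V] [Module ℂ V] {r : ℕ}
    (M : Fin r → Module.End ℂ V) (lam : ℂ) : Submodule ℂ (Fin r → V) :=
  ⨅ k : Fin r, LinearMap.ker (convOp M lam k - 1)

/-- The subspace `K + L` with `K = K_1 ⊕ ⋯ ⊕ K_r`. -/
noncomputable def KLsub {V : Type*} [AddCommGroup V] [Module ℂ V] {r : ℕ}
    (M : Fin r → Module.End ℂ V) (lam : ℂ) : Submodule ℂ (Fin r → V) :=
  (⨆ k : Fin r, Ksub M k) ⊔ Lsub M lam

/-- The middle convolution operator `Ñ_k` induced by `N_k` on `V^r/(K + L)`. -/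
noncomputable def mcOp {V : Type*} [AddCommGroup V] [Module ℂ V] {r : ℕ}
    (M : Fin r → Module.End ℂ V) (lam : ℂ)
    (h : ∀ k : Fin r, KLsub M lam ≤ (KLsub M lam).comap (convOp M lam k))
    (k : Fin r) : Module.End ℂ ((Fin r → V) ⧸ KLsub M lam) :=
  Submodule.mapQ _ _ (convOp M lam k) (h k)

/-- Condition (*): there is no nonzero `v ∈ V` fixed by all `M_j`, `j ≠ i`, which is an
eigenvector of `M_i`. -/
def CondStar {V : Type*} [AddCommGroup V] [Module ℂ V] {r : ℕ}
    (M : Fin r → Module.End ℂ V) : Prop :=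
  ∀ i : Fin r,
    ¬ ∃ v : V, v ≠ 0 ∧ (∀ j : Fin r, j ≠ i → M j v = v) ∧ ∃ a : ℂ, M i v = a • v

/-- Condition (**): there is no codimension-one subspace `W ⊆ V` invariant under all `M_j`
with `(M_j − 1)(V) ⊆ W` for all `j ≠ i`. -/
def CondStarStar {V : Type*} [AddCommGroup V] [Module ℂ V] {r : ℕ}
    (M : Fin r → Module.End ℂ V) : Prop :=
  ∀ i : Fin r,
    ¬ ∃ W : Submodule ℂ V, Module.finrank ℂ (V ⧸ W) = 1 ∧
      (∀ j : Fin r, W.map (M j) ≤ W) ∧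
      ∀ j : Fin r, j ≠ i → LinearMap.range (M j - 1) ≤ W
section Helpers

variable {V : Type*} [AddCommGroup V] [Module ℂ V] {r : ℕ}

/-- The `k`-th "row minus identity" map: `ρ_k(v) = Σ_i c_{k,i} v_i − v_k`. -/
noncomputable def rowRho (M : Fin r → Module.End ℂ V) (lam : ℂ) (k : Fin r) :
    (Fin r → V) →ₗ[ℂ] V :=
  (∑ i : Fin r, convCoeff M lam k i ∘ₗ LinearMap.proj i) - LinearMap.proj k

lemma rowRho_apply (M : Fin r → Module.End ℂ V) (lam : ℂ) (k : Fin r) (v : Fin r → V) :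
    rowRho M lam k v = (∑ i : Fin r, convCoeff M lam k i (v i)) - v k := by
  simp [rowRho, LinearMap.sum_apply]

lemma convOp_apply (M : Fin r → Module.End ℂ V) (lam : ℂ) (k : Fin r) (v : Fin r → V) :
    convOp M lam k v = v + Pi.single k (rowRho M lam k v) := by
  funext j
  rcases eq_or_ne j k with rfl | hj
  · simp [convOp, LinearMap.pi_apply, rowRho_apply, LinearMap.sum_apply]
  · simp [convOp, LinearMap.pi_apply, hj, Pi.single_eq_of_ne hj]

lemma convCoeff_lt (M : Fin r → Module.End ℂ V) (lam : ℂ) {k i : Fin r} (h : i < k) (u : V) :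
    convCoeff M lam k i u = M i u - u := by
  simp [convCoeff, h]

lemma convCoeff_self (M : Fin r → Module.End ℂ V) (lam : ℂ) (k : Fin r) (u : V) :
    convCoeff M lam k k u = lam • M k u := by
  simp [convCoeff]

lemma convCoeff_gt (M : Fin r → Module.End ℂ V) (lam : ℂ) {k i : Fin r} (h : k < i) (u : V) :
    convCoeff M lam k i u = lam • (M i u - u) := by
  have h1 : ¬ i < k := not_lt.2 h.le
  have h2 : i ≠ k := ne_of_gt h
  simp [convCoeff, h1, h2]

lemma rowRho_single (M : Fin r → Module.End ℂ V) (lam : ℂ) (k j : Fin r) (u : V) :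
    rowRho M lam k (Pi.single j u) = convCoeff M lam k j u - (Pi.single j u : Fin r → V) k := by
  rw [rowRho_apply]
  congr 1
  rw [Finset.sum_eq_single j (fun i _ hij => by rw [Pi.single_eq_of_ne hij, map_zero])
    (fun h => absurd (Finset.mem_univ j) h), Pi.single_eq_same]

lemma rowRho_single_lt (M : Fin r → Module.End ℂ V) (lam : ℂ) {k j : Fin r} (h : j < k) (u : V) :
    rowRho M lam k (Pi.single j u) = M j u - u := by
  rw [rowRho_single, convCoeff_lt M lam h, Pi.single_eq_of_ne (ne_of_gt h), sub_zero]

lemma rowRho_single_self (M : Fin r → Module.End ℂ V) (lam : ℂ) (k : Fin r) (u : V) :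
    rowRho M lam k (Pi.single k u) = lam • M k u - u := by
  rw [rowRho_single, convCoeff_self, Pi.single_eq_same]

lemma rowRho_single_gt (M : Fin r → Module.End ℂ V) (lam : ℂ) {k j : Fin r} (h : k < j) (u : V) :
    rowRho M lam k (Pi.single j u) = lam • (M j u - u) := by
  rw [rowRho_single, convCoeff_gt M lam h, Pi.single_eq_of_ne (ne_of_lt h), sub_zero]

lemma rowRho_eq_sum_single (M : Fin r → Module.End ℂ V) (lam : ℂ) (k : Fin r) (v : Fin r → V) :
    rowRho M lam k v = ∑ j : Fin r, rowRho M lam k (Pi.single j (v j)) := by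
  rw [← map_sum, Finset.univ_sum_single]

lemma mem_Ksub_iff (M : Fin r → Module.End ℂ V) (k : Fin r) (v : Fin r → V) :
    v ∈ Ksub M k ↔ (∀ j : Fin r, j ≠ k → v j = 0) ∧ M k (v k) = v k := by
  constructor
  · intro hv
    rw [Ksub, Submodule.mem_pi] at hv
    constructor
    · intro j hj
      have := hv j (Set.mem_univ j)
      simpa [hj] using this
    · have := hv k (Set.mem_univ k)
      rw [if_pos rfl, LinearMap.mem_ker, LinearMap.sub_apply, Module.End.one_apply,
        sub_eq_zero] at this
      exact this
  · rintro ⟨h0, hk⟩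
    rw [Ksub, Submodule.mem_pi]
    intro j _
    rcases eq_or_ne j k with rfl | hj
    · rw [if_pos rfl, LinearMap.mem_ker, LinearMap.sub_apply, Module.End.one_apply,
        sub_eq_zero]
      exact hk
    · simp [hj, h0 j hj]

lemma mem_iSup_Ksub (M : Fin r → Module.End ℂ V) (v : Fin r → V) :
    (v ∈ ⨆ k : Fin r, Ksub M k) ↔ ∀ j : Fin r, M j (v j) = v j := by
  constructor
  · intro hv
    have hle : (⨆ k : Fin r, Ksub M k) ≤
        Submodule.pi Set.univ (fun j => LinearMap.ker (M j - 1)) := by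
      refine iSup_le fun k => ?_
      intro w hw
      rw [mem_Ksub_iff] at hw
      rw [Submodule.mem_pi]
      intro j _
      rcases eq_or_ne j k with rfl | hj
      · rw [LinearMap.mem_ker, LinearMap.sub_apply, Module.End.one_apply, sub_eq_zero]
        exact hw.2
      · simp [hw.1 j hj]
    have := hle hv
    rw [Submodule.mem_pi] at this
    intro j
    have := this j (Set.mem_univ j)
    simpa [LinearMap.mem_ker, sub_eq_zero] using this
  · intro hv
    rw [← Finset.univ_sum_single v]
    refine Submodule.sum_mem _ fun j _ => ?_
    refine Submodule.mem_iSup_of_mem j ?_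
    rw [mem_Ksub_iff]
    refine ⟨fun i hi => Pi.single_eq_of_ne hi _, ?_⟩
    rw [Pi.single_eq_same]
    exact hv j

lemma mem_Lsub_iff (M : Fin r → Module.End ℂ V) (lam : ℂ) (v : Fin r → V) :
    v ∈ Lsub M lam ↔ ∀ k : Fin r, rowRho M lam k v = 0 := by
  rw [Lsub, Submodule.mem_iInf]
  refine forall_congr' fun k => ?_
  have h1 : (1 : Module.End ℂ (Fin r → V)) v = v := rfl
  rw [LinearMap.mem_ker, LinearMap.sub_apply, h1, sub_eq_zero, convOp_apply]
  constructor
  · intro h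
    have h2 : Pi.single k (rowRho M lam k v) = (0 : Fin r → V) := add_eq_left.mp h
    have := congrFun h2 k
    simpa using this
  · intro h; rw [h]; simp

lemma mem_KLsub_iff (M : Fin r → Module.End ℂ V) (lam : ℂ) (v : Fin r → V) :
    v ∈ KLsub M lam ↔ ∃ κ ℓ : Fin r → V, (∀ j : Fin r, M j (κ j) = κ j) ∧
      (∀ k : Fin r, rowRho M lam k ℓ = 0) ∧ v = κ + ℓ := by
  rw [KLsub, Submodule.mem_sup]
  constructor
  · rintro ⟨κ, hκ, ℓ, hℓ, rfl⟩
    exact ⟨κ, ℓ, (mem_iSup_Ksub M κ).1 hκ, (mem_Lsub_iff M lam ℓ).1 hℓ, rfl⟩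
  · rintro ⟨κ, ℓ, hκ, hℓ, rfl⟩
    exact ⟨κ, (mem_iSup_Ksub M κ).2 hκ, ℓ, (mem_Lsub_iff M lam ℓ).2 hℓ, rfl⟩

end Helpers
section Key

variable {V : Type*} [AddCommGroup V] [Module ℂ V] {r : ℕ}

lemma rowRho_sum_subset (M : Fin r → Module.End ℂ V) (lam : ℂ) (j : Fin r) (v : Fin r → V)
    {s : Finset (Fin r)} (hj : j ∈ s) (h : ∀ i, i ∉ s → M i (v i) = v i) :
    rowRho M lam j v = ∑ i ∈ s, rowRho M lam j (Pi.single i (v i)) := by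
  rw [rowRho_eq_sum_single]
  refine (Finset.sum_subset (Finset.subset_univ s) fun i _ hi => ?_).symm
  have hij : i ≠ j := fun h' => hi (h' ▸ hj)
  rcases lt_or_gt_of_ne hij with hlt | hgt
  · rw [rowRho_single_lt M lam hlt, h i hi, sub_self]
  · rw [rowRho_single_gt M lam hgt, h i hi, sub_self, smul_zero]

lemma rowRho_of_fixed (M : Fin r → Module.End ℂ V) (lam : ℂ) (j : Fin r) {v : Fin r → V}
    (h : ∀ i, M i (v i) = v i) :
    rowRho M lam j v = (lam - 1) • v j := by
  rw [rowRho_sum_subset M lam j v (Finset.mem_singleton_self j) (fun i _ => h i),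
    Finset.sum_singleton, rowRho_single_self, h j, sub_smul, one_smul]

lemma rowRho_one_eq (M : Fin r → Module.End ℂ V) (j : Fin r) (v : Fin r → V) :
    rowRho M 1 j v = ∑ i : Fin r, (M i (v i) - v i) := by
  rw [rowRho_eq_sum_single]
  refine Finset.sum_congr rfl fun i _ => ?_
  rcases lt_trichotomy i j with hlt | rfl | hgt
  · rw [rowRho_single_lt M 1 hlt]
  · rw [rowRho_single_self, one_smul]
  · rw [rowRho_single_gt M 1 hgt, one_smul]

lemma fixed_eq_zero {M : Fin r → Module.End ℂ V} (hr : 1 ≤ r) (hstar : CondStar M)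
    {v : V} (hv : ∀ j, M j v = v) : v = 0 := by
  by_contra h
  exact hstar ⟨0, hr⟩ ⟨v, h, fun j _ => hv j, 1, by rw [hv ⟨0, hr⟩, one_smul]⟩

/-- Lemma A: an element of `K + L` supported in the single slot `k` lies in `K`. -/
lemma slot_mem_K {M : Fin r → Module.End ℂ V} (hstar : CondStar M)
    {lam : ℂ} (hlam0 : lam ≠ 0) {k : Fin r} {w : Fin r → V}
    (hw : w ∈ KLsub M lam) (h0 : ∀ j, j ≠ k → w j = 0) :
    ∀ j, M j (w j) = w j := by
  obtain ⟨κ, ℓ, hκ, hℓ, rfl⟩ := (mem_KLsub_iff M lam _).1 hw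
  have hℓfix : ∀ i, i ≠ k → M i (ℓ i) = ℓ i := by
    intro i hi
    have h2 : κ i + ℓ i = 0 := h0 i hi
    have h3 : ℓ i = -κ i := eq_neg_of_add_eq_zero_right h2
    rw [h3, map_neg, hκ i]
  have hEk : lam • M k (ℓ k) - ℓ k = 0 := by
    have h4 := hℓ k
    rwa [rowRho_sum_subset M lam k ℓ (Finset.mem_singleton_self k)
      (fun i hi => hℓfix i (by simpa using hi)), Finset.sum_singleton,
      rowRho_single_self] at h4
  have hMk : M k (ℓ k) = ℓ k := by
    rcases eq_or_ne lam 1 with rfl | hlam1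
    · rw [one_smul, sub_eq_zero] at hEk; exact hEk
    · have hsub : lam - 1 ≠ 0 := sub_ne_zero.mpr hlam1
      have hMkval : M k (ℓ k) = lam⁻¹ • ℓ k := by
        have h9 : lam • M k (ℓ k) = ℓ k := sub_eq_zero.mp hEk
        calc M k (ℓ k) = lam⁻¹ • (lam • M k (ℓ k)) := by
              rw [smul_smul, inv_mul_cancel₀ hlam0, one_smul]
          _ = lam⁻¹ • ℓ k := by rw [h9]
      by_cases hzero : ℓ k = 0
      · rw [hzero, map_zero]
      · exfalso
        apply hstar k
        refine ⟨ℓ k, hzero, ?_, lam⁻¹, hMkval⟩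
        intro j hj
        have hEj := hℓ j
        rw [rowRho_sum_subset M lam j ℓ (Finset.mem_insert_self j {k})
          (fun i hi => by
            simp only [Finset.mem_insert, Finset.mem_singleton, not_or] at hi
            exact hℓfix i hi.2),
          Finset.sum_pair hj] at hEj
        have hMkd : M k (ℓ k) - ℓ k = (lam⁻¹ - 1) • ℓ k := by
          rw [hMkval, sub_smul, one_smul]
        rcases lt_or_gt_of_ne hj with hlt | hgt
        · -- j < k
          rw [rowRho_single_self, rowRho_single_gt M lam hlt, hℓfix j hj, hMkd] at hEj
          have h5 : (lam - 1) • (ℓ j - ℓ k)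
              = lam • ℓ j - ℓ j + lam • ((lam⁻¹ - 1) • ℓ k) := by
            match_scalars <;> field_simp <;> ring
          rw [hEj] at h5
          have h6 : ℓ j = ℓ k :=
            sub_eq_zero.mp ((smul_eq_zero.mp h5).resolve_left hsub)
          rw [← h6, hℓfix j hj, h6]
        · -- k < j
          rw [rowRho_single_self, rowRho_single_lt M lam hgt, hℓfix j hj, hMkd] at hEj
          have h5 : (lam - 1) • (ℓ j - lam⁻¹ • ℓ k)
              = lam • ℓ j - ℓ j + (lam⁻¹ - 1) • ℓ k := by
            match_scalars <;> field_simp <;> ring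
          rw [hEj] at h5
          have h6 : ℓ j = lam⁻¹ • ℓ k :=
            sub_eq_zero.mp ((smul_eq_zero.mp h5).resolve_left hsub)
          have h7 : lam • ℓ j = ℓ k := by
            rw [h6, smul_smul, mul_inv_cancel₀ hlam0, one_smul]
          calc M j (ℓ k) = M j (lam • ℓ j) := by rw [h7]
            _ = lam • M j (ℓ j) := map_smul _ _ _
            _ = lam • ℓ j := by rw [hℓfix j hj]
            _ = ℓ k := h7
  intro j
  rcases eq_or_ne j k with rfl | hj
  · rw [Pi.add_apply, map_add, hκ j, hMk]
  · rw [h0 j hj, map_zero]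

/-- Lemma B: if every row `ρ^λ_k(g)` is fixed by `M k`, then `g ∈ K + L`. -/
lemma rows_fixed_mem_KLsub {M : Fin r → Module.End ℂ V} (hr : 1 ≤ r) (hstar : CondStar M)
    {lam : ℂ} {g : Fin r → V}
    (hg : ∀ k, M k (rowRho M lam k g) = rowRho M lam k g) : g ∈ KLsub M lam := by
  rcases eq_or_ne lam 1 with rfl | hlam1
  · have hS : ∀ j, rowRho M 1 j g = rowRho M 1 ⟨0, hr⟩ g := fun j => by
      rw [rowRho_one_eq, rowRho_one_eq]
    have hfix : ∀ j, M j (rowRho M 1 ⟨0, hr⟩ g) = rowRho M 1 ⟨0, hr⟩ g := by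
      intro j
      have := hg j
      rwa [hS j] at this
    have h0 := fixed_eq_zero hr hstar hfix
    refine Submodule.mem_sup_right ((mem_Lsub_iff M 1 g).2 fun k => ?_)
    rw [hS k, h0]
  · have hsub : lam - 1 ≠ 0 := sub_ne_zero.mpr hlam1
    set κ : Fin r → V := fun k => (lam - 1)⁻¹ • rowRho M lam k g with hκdef
    have hκfix : ∀ j, M j (κ j) = κ j := by
      intro j
      rw [hκdef]
      simp only
      rw [map_smul, hg j]
    refine (mem_KLsub_iff M lam g).2 ⟨κ, g - κ, hκfix, ?_, by abel⟩
    intro j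
    rw [map_sub, rowRho_of_fixed M lam j hκfix, hκdef]
    simp only
    rw [smul_smul, mul_inv_cancel₀ hsub, one_smul, sub_self]

/-- Surjectivity of the row map, from condition (**). -/
lemma rowRho_surjective [FiniteDimensional ℂ V] {M : Fin r → Module.End ℂ V}
    (hss : CondStarStar M) {lam : ℂ} (hlam : lam ≠ 0) (k : Fin r) :
    Function.Surjective (rowRho M lam k) := by
  rw [← LinearMap.range_eq_top]
  by_contra hne
  obtain ⟨x, hx⟩ : ∃ x, x ∉ LinearMap.range (rowRho M lam k) := by
    by_contra hc; push_neg at hc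
    exact hne (eq_top_iff.2 fun y _ => hc y)
  obtain ⟨f, hfx, hf0⟩ := Submodule.exists_dual_map_eq_bot_of_notMem hx inferInstance
  have hUker : ∀ u ∈ LinearMap.range (rowRho M lam k), f u = 0 := by
    intro u hu
    have h2 : f u ∈ Submodule.map f (LinearMap.range (rowRho M lam k)) :=
      Submodule.mem_map_of_mem hu
    rw [hf0] at h2
    exact h2
  have hin : ∀ (j : Fin r) (u : V),
      rowRho M lam k (Pi.single j u) ∈ LinearMap.range (rowRho M lam k) :=
    fun j u => LinearMap.mem_range_self _ _
  have hker_lt : ∀ {j : Fin r}, j < k → ∀ u, f (M j u - u) = 0 := by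
    intro j h u
    have := hUker _ (hin j u)
    rwa [rowRho_single_lt M lam h u] at this
  have hker_gt : ∀ {j : Fin r}, k < j → ∀ u, f (M j u - u) = 0 := by
    intro j h u
    have h1 := hUker _ (hin j u)
    rw [rowRho_single_gt M lam h u, map_smul, smul_eq_mul] at h1
    exact (mul_eq_zero.mp h1).resolve_left hlam
  have hker_self : ∀ u, f u = 0 → f (M k u) = 0 := by
    intro u hu
    have h1 := hUker _ (hin k u)
    rw [rowRho_single_self, map_sub, map_smul, smul_eq_mul, hu, sub_zero] at h1
    exact (mul_eq_zero.mp h1).resolve_left hlam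
  apply hss k
  refine ⟨LinearMap.ker f, ?_, ?_, ?_⟩
  · have hsurj : Function.Surjective f := by
      intro c
      refine ⟨(c * (f x)⁻¹) • x, ?_⟩
      rw [map_smul, smul_eq_mul, mul_assoc, inv_mul_cancel₀ hfx, mul_one]
    have e := (LinearMap.quotKerEquivRange f).trans
      (LinearEquiv.ofTop _ (LinearMap.range_eq_top.2 hsurj))
    rw [e.finrank_eq, Module.finrank_self]
  · intro j
    rintro y hy
    rw [Submodule.mem_map] at hy
    obtain ⟨w, hw, rfl⟩ := hy
    rw [LinearMap.mem_ker] at hw ⊢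
    rcases lt_trichotomy j k with hlt | rfl | hgt
    · have := hker_lt hlt w; rw [map_sub, hw, sub_zero] at this; exact this
    · exact hker_self w hw
    · have := hker_gt hgt w; rw [map_sub, hw, sub_zero] at this; exact this
  · intro j hj
    rintro y hy
    rw [LinearMap.mem_range] at hy
    obtain ⟨w, rfl⟩ := hy
    have hwe : (M j - 1) w = M j w - w := rfl
    rw [LinearMap.mem_ker, hwe]
    rcases lt_or_gt_of_ne hj with hlt | hgt
    · exact hker_lt hlt w
    · exact hker_gt hgt w

end Key
section Outer

variable {V : Type*} [AddCommGroup V] [Module ℂ V] {r : ℕ}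

lemma convOp_sub_self (M : Fin r → Module.End ℂ V) (lam : ℂ) (k : Fin r) (v : Fin r → V) :
    convOp M lam k v - v = Pi.single k (rowRho M lam k v) := by
  rw [convOp_apply]; abel

lemma convOp_apply_ne (M : Fin r → Module.End ℂ V) (lam : ℂ) {k j : Fin r} (h : j ≠ k)
    (v : Fin r → V) : convOp M lam k v j = v j := by
  rw [convOp_apply]; simp [Pi.single_eq_of_ne h]

lemma convOp_apply_self (M : Fin r → Module.End ℂ V) (lam : ℂ) (k : Fin r) (v : Fin r → V) :
    convOp M lam k v k = v k + rowRho M lam k v := by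
  rw [convOp_apply]; simp

lemma single_fixed_mem (M : Fin r → Module.End ℂ V) (lam : ℂ) {i : Fin r} {u : V}
    (hu : M i u = u) : Pi.single i u ∈ KLsub M lam := by
  refine Submodule.mem_sup_left ((mem_iSup_Ksub M _).2 fun j => ?_)
  rcases eq_or_ne j i with rfl | hj
  · rw [Pi.single_eq_same]; exact hu
  · rw [Pi.single_eq_of_ne hj, map_zero]

/-- The key double-row identity: `ρ^{λ₁}_k ∘ ρ^{C_{λ₁}, λ₂}_k = ρ^{λ₁λ₂}_k ∘ Ψ`. -/
lemma rho_row_outer (M : Fin r → Module.End ℂ V) (lam1 lam2 : ℂ)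
    (b : Fin r → Fin r → V) (k : Fin r) :
    rowRho M lam1 k (rowRho (fun j => convOp M lam1 j) lam2 k b)
      = rowRho M (lam1 * lam2) k (fun i => rowRho M lam1 i (b i)) := by
  rw [rowRho_eq_sum_single (fun j => convOp M lam1 j) lam2 k b, map_sum,
    rowRho_eq_sum_single M (lam1 * lam2) k]
  refine Finset.sum_congr rfl fun j _ => ?_
  rcases lt_trichotomy j k with hlt | rfl | hgt
  · rw [rowRho_single_lt _ lam2 hlt, rowRho_single_lt M (lam1 * lam2) hlt,
      convOp_sub_self, rowRho_single_lt M lam1 hlt]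
  · rw [rowRho_single_self, rowRho_single_self]
    have h2 : convOp M lam1 j (b j) = b j + Pi.single j (rowRho M lam1 j (b j)) :=
      convOp_apply (M := M) lam1 j (b j)
    rw [map_sub, map_smul, h2, map_add, rowRho_single_self]
    module
  · rw [rowRho_single_gt _ lam2 hgt, rowRho_single_gt M (lam1 * lam2) hgt,
      convOp_sub_self, map_smul, rowRho_single_gt M lam1 hgt, smul_smul,
      mul_comm lam2 lam1, ← smul_smul]

/-- Intertwining at the level of `V^{r²}`: `Ψ ∘ B_k = C_{λ₁λ₂}(M)_k ∘ Ψ`. -/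
lemma psi_intertwine (M : Fin r → Module.End ℂ V) (lam1 lam2 : ℂ)
    (b : Fin r → Fin r → V) (k : Fin r) :
    (fun i => rowRho M lam1 i (convOp (fun j => convOp M lam1 j) lam2 k b i))
      = convOp M (lam1 * lam2) k (fun i => rowRho M lam1 i (b i)) := by
  funext i
  rcases eq_or_ne i k with rfl | hik
  · rw [convOp_apply_self, convOp_apply_self, map_add, rho_row_outer]
  · rw [convOp_apply_ne _ _ hik, convOp_apply_ne _ _ hik]

variable (M : Fin r → Module.End ℂ V) (lam1 lam2 : ℂ)
  (h1 : ∀ k : Fin r, KLsub M lam1 ≤ (KLsub M lam1).comap (convOp M lam1 k))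

lemma mcOp_mk (k : Fin r) (u : Fin r → V) :
    mcOp M lam1 h1 k (Submodule.Quotient.mk u)
      = Submodule.Quotient.mk (convOp M lam1 k u) :=
  Submodule.mapQ_apply _ _ _ _

lemma rowRho_mcOp_mk (b : Fin r → Fin r → V) (k : Fin r) :
    rowRho (mcOp M lam1 h1) lam2 k (fun i => Submodule.Quotient.mk (b i))
      = Submodule.Quotient.mk (rowRho (fun j => convOp M lam1 j) lam2 k b) := by
  rw [rowRho_apply, rowRho_apply]
  have hterm : ∀ i : Fin r, convCoeff (mcOp M lam1 h1) lam2 k i (Submodule.Quotient.mk (b i))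
      = (Submodule.Quotient.mk (convCoeff (fun j => convOp M lam1 j) lam2 k i (b i)) :
          (Fin r → V) ⧸ KLsub M lam1) := by
    intro i
    rcases lt_trichotomy i k with hlt | rfl | hgt
    · rw [convCoeff_lt _ _ hlt, convCoeff_lt _ _ hlt]
      show mcOp M lam1 h1 i (Submodule.Quotient.mk (b i)) - Submodule.Quotient.mk (b i) = _
      rw [mcOp_mk]
      show _ = Submodule.Quotient.mk (convOp M lam1 i (b i) - b i)
      rw [Submodule.Quotient.mk_sub]
    · rw [convCoeff_self, convCoeff_self]
      show lam2 • mcOp M lam1 h1 i (Submodule.Quotient.mk (b i)) = _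
      rw [mcOp_mk]
      show _ = Submodule.Quotient.mk (lam2 • convOp M lam1 i (b i))
      rw [Submodule.Quotient.mk_smul]
    · rw [convCoeff_gt _ _ hgt, convCoeff_gt _ _ hgt]
      show lam2 • (mcOp M lam1 h1 i (Submodule.Quotient.mk (b i)) - Submodule.Quotient.mk (b i))
        = _
      rw [mcOp_mk]
      show _ = Submodule.Quotient.mk (lam2 • (convOp M lam1 i (b i) - b i))
      rw [Submodule.Quotient.mk_smul, Submodule.Quotient.mk_sub]
  calc (∑ i : Fin r, convCoeff (mcOp M lam1 h1) lam2 k i (Submodule.Quotient.mk (b i)))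
        - Submodule.Quotient.mk (b k)
      = (∑ i : Fin r, (Submodule.Quotient.mk
          (convCoeff (fun j => convOp M lam1 j) lam2 k i (b i)) :
            (Fin r → V) ⧸ KLsub M lam1)) - Submodule.Quotient.mk (b k) := by
        rw [Finset.sum_congr rfl fun i _ => hterm i]
    _ = _ := by
        rw [Submodule.Quotient.mk_sub]
        congr 1
        simp only [← Submodule.mkQ_apply]
        rw [map_sum]

lemma convOp_mcOp_mk (b : Fin r → Fin r → V) (k : Fin r) :
    convOp (mcOp M lam1 h1) lam2 k (fun i => Submodule.Quotient.mk (b i))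
      = fun i => (Submodule.Quotient.mk (convOp (fun j => convOp M lam1 j) lam2 k b i) :
          (Fin r → V) ⧸ KLsub M lam1) := by
  funext i
  rcases eq_or_ne i k with rfl | hik
  · rw [convOp_apply_self, convOp_apply_self, rowRho_mcOp_mk, ← Submodule.Quotient.mk_add]
  · rw [convOp_apply_ne _ _ hik, convOp_apply_ne _ _ hik]

end Outer
section PsiBarSec

variable {V : Type*} [AddCommGroup V] [Module ℂ V] {r : ℕ}

lemma sum_split (i : Fin r) {β : Type*} [AddCommMonoid β] (f : Fin r → β) :
    ∑ j : Fin r, f j = (∑ j ∈ Finset.univ.filter (fun j => j < i), f j) + f i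
      + ∑ j ∈ Finset.univ.filter (fun j => i < j), f j := by
  have hsplit : (Finset.univ.filter (fun j => ¬ j < i))
      = insert i (Finset.univ.filter (fun j => i < j)) := by
    ext j
    simp only [Finset.mem_filter, Finset.mem_univ, true_and, Finset.mem_insert, not_lt]
    constructor
    · intro h
      rcases eq_or_lt_of_le h with h' | h'
      · exact Or.inl h'.symm
      · exact Or.inr h'
    · rintro (rfl | h)
      · exact le_refl _
      · exact h.le
  rw [← Finset.sum_filter_add_sum_filter_not Finset.univ (fun j => j < i) f, hsplit,
    Finset.sum_insert (by simp), add_assoc]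

lemma rowRho_split (M : Fin r → Module.End ℂ V) (lam : ℂ) (i : Fin r) (v : Fin r → V) :
    rowRho M lam i v = (∑ j ∈ Finset.univ.filter (fun j => j < i), (M j (v j) - v j))
      + (lam • M i (v i) - v i)
      + lam • (∑ j ∈ Finset.univ.filter (fun j => i < j), (M j (v j) - v j)) := by
  rw [rowRho_eq_sum_single, sum_split i]
  congr 1
  · congr 1
    · refine Finset.sum_congr rfl fun j hj => ?_
      rw [rowRho_single_lt M lam (Finset.mem_filter.1 hj).2]
    · rw [rowRho_single_self]
  · rw [Finset.smul_sum]
    refine Finset.sum_congr rfl fun j hj => ?_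
    rw [rowRho_single_gt M lam (Finset.mem_filter.1 hj).2]

lemma rowRho_mem_fixed {M : Fin r → Module.End ℂ V} {lam : ℂ} (k : Fin r) {w : Fin r → V}
    (hw : w ∈ KLsub M lam) : M k (rowRho M lam k w) = rowRho M lam k w := by
  obtain ⟨κ, ℓ, hκ, hℓ, rfl⟩ := (mem_KLsub_iff M lam _).1 hw
  rw [map_add (rowRho M lam k), hℓ k, add_zero, rowRho_of_fixed M lam k hκ, map_smul, hκ k]

variable (M : Fin r → Module.End ℂ V) (lam1 lam2 : ℂ)

/-- The `i`-th block of the descended map `Ψ̄`. -/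
noncomputable def phiMap (i : Fin r) :
    ((Fin r → V) ⧸ KLsub M lam1) →ₗ[ℂ] ((Fin r → V) ⧸ KLsub M (lam1 * lam2)) :=
  Submodule.liftQ _ ((KLsub M (lam1 * lam2)).mkQ ∘ₗ
      LinearMap.single ℂ (fun _ => V) i ∘ₗ rowRho M lam1 i) (by
    intro b hb
    obtain ⟨κ, ℓ, hκ, hℓ, rfl⟩ := (mem_KLsub_iff M lam1 _).1 hb
    rw [LinearMap.mem_ker, LinearMap.comp_apply, LinearMap.comp_apply,
      map_add (rowRho M lam1 i), hℓ i, add_zero, rowRho_of_fixed M lam1 i hκ]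
    have hs : LinearMap.single ℂ (fun _ => V) i ((lam1 - 1) • κ i)
        = Pi.single i ((lam1 - 1) • κ i) := rfl
    rw [hs, Submodule.mkQ_apply, Submodule.Quotient.mk_eq_zero]
    exact single_fixed_mem M _ (by rw [map_smul, hκ i]))

lemma phiMap_mk (i : Fin r) (b : Fin r → V) :
    phiMap M lam1 lam2 i (Submodule.Quotient.mk b)
      = Submodule.Quotient.mk (Pi.single i (rowRho M lam1 i b)) := by
  rw [phiMap, Submodule.liftQ_apply]
  rfl

/-- The descended map `Ψ̄ : Q^r → V^r/(K + L_λ)`. -/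
noncomputable def PsiBar :
    (Fin r → ((Fin r → V) ⧸ KLsub M lam1)) →ₗ[ℂ] ((Fin r → V) ⧸ KLsub M (lam1 * lam2)) :=
  ∑ i : Fin r, phiMap M lam1 lam2 i ∘ₗ LinearMap.proj i

lemma PsiBar_apply (x : Fin r → ((Fin r → V) ⧸ KLsub M lam1)) :
    PsiBar M lam1 lam2 x = ∑ i : Fin r, phiMap M lam1 lam2 i (x i) := by
  rw [PsiBar, LinearMap.sum_apply]
  rfl

lemma PsiBar_mk (b : Fin r → Fin r → V) :
    PsiBar M lam1 lam2 (fun i => Submodule.Quotient.mk (b i))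
      = Submodule.Quotient.mk (fun i => rowRho M lam1 i (b i)) := by
  rw [PsiBar_apply]
  have h1 : ∀ i : Fin r, phiMap M lam1 lam2 i
      ((fun j => (Submodule.Quotient.mk (b j) : (Fin r → V) ⧸ KLsub M lam1)) i)
      = Submodule.Quotient.mk (Pi.single i (rowRho M lam1 i (b i))) := fun i =>
    phiMap_mk M lam1 lam2 i (b i)
  rw [Finset.sum_congr rfl fun i _ => h1 i]
  simp only [← Submodule.mkQ_apply]
  rw [← map_sum]
  congr 1
  exact Finset.univ_sum_single _

end PsiBarSec

/-- `MC_{λ₂}(MC_{λ₁}(M)) ≅ MC_{λ₁λ₂}(M)` as representations of the free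
group `F_r`: there is a linear isomorphism intertwining the `k`-th components for all `k`. -/
theorem middle_convolution_multiplicative
    {V : Type*} [AddCommGroup V] [Module ℂ V] [FiniteDimensional ℂ V]
    {r : ℕ} (hr : 1 ≤ r)
    (M : Fin r → Module.End ℂ V) (hM : ∀ i : Fin r, Function.Bijective (M i))
    (hstar : CondStar M) (hstarstar : CondStarStar M)
    (lam1 lam2 : ℂ) (hlam1 : lam1 ≠ 0) (hlam2 : lam2 ≠ 0)
    (h1 : ∀ k : Fin r, KLsub M lam1 ≤ (KLsub M lam1).comap (convOp M lam1 k))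
    (h2 : ∀ k : Fin r, KLsub (mcOp M lam1 h1) lam2 ≤
      (KLsub (mcOp M lam1 h1) lam2).comap (convOp (mcOp M lam1 h1) lam2 k))
    (h12 : ∀ k : Fin r, KLsub M (lam1 * lam2) ≤
      (KLsub M (lam1 * lam2)).comap (convOp M (lam1 * lam2) k)) :
    ∃ T : ((Fin r → ((Fin r → V) ⧸ KLsub M lam1)) ⧸ KLsub (mcOp M lam1 h1) lam2)
        ≃ₗ[ℂ] ((Fin r → V) ⧸ KLsub M (lam1 * lam2)),
      ∀ k : Fin r, ∀ x,
        T (mcOp (mcOp M lam1 h1) lam2 h2 k x) = mcOp M (lam1 * lam2) h12 k (T x) := by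
  
  classical
  have hQmk : ∀ x : Fin r → ((Fin r → V) ⧸ KLsub M lam1), ∃ b : Fin r → Fin r → V,
      x = fun i => Submodule.Quotient.mk (b i) := by
    intro x
    choose b hb using fun i => Submodule.Quotient.mk_surjective (KLsub M lam1) (x i)
    exact ⟨b, funext fun i => (hb i).symm⟩
  -- the kernel condition for descending `Ψ̄`
  have hker : KLsub (mcOp M lam1 h1) lam2 ≤ LinearMap.ker (PsiBar M lam1 lam2) := by
    refine sup_le ?_ ?_
    · refine iSup_le fun k => fun x hx => ?_
      rw [mem_Ksub_iff] at hx
      obtain ⟨b, hb⟩ := Submodule.Quotient.mk_surjective (KLsub M lam1) (x k)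
      rw [LinearMap.mem_ker, PsiBar_apply,
        Finset.sum_eq_single k (fun i _ hik => by rw [hx.1 i hik, map_zero])
          (fun h => absurd (Finset.mem_univ k) h), ← hb, phiMap_mk,
        Submodule.Quotient.mk_eq_zero]
      have hfix_mem : Pi.single k (rowRho M lam1 k b) ∈ KLsub M lam1 := by
        have hNk := hx.2
        rw [← hb, mcOp_mk] at hNk
        have hdiff : convOp M lam1 k b - b ∈ KLsub M lam1 :=
          (Submodule.Quotient.eq _).1 hNk
        rwa [convOp_sub_self] at hdiff
      have hfixed := slot_mem_K hstar hlam1 hfix_mem (fun j hj => Pi.single_eq_of_ne hj _)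
      exact Submodule.mem_sup_left ((mem_iSup_Ksub M _).2 hfixed)
    · intro x hx
      rw [mem_Lsub_iff] at hx
      obtain ⟨b, rfl⟩ := hQmk x
      rw [LinearMap.mem_ker, PsiBar_mk, Submodule.Quotient.mk_eq_zero]
      refine rows_fixed_mem_KLsub hr hstar fun k => ?_
      have hCk : rowRho (fun j => convOp M lam1 j) lam2 k b ∈ KLsub M lam1 := by
        have h3 := hx k
        rwa [rowRho_mcOp_mk M lam1 lam2 h1 b k, Submodule.Quotient.mk_eq_zero] at h3
      rw [← rho_row_outer M lam1 lam2 b k]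
      exact rowRho_mem_fixed k hCk
  set T0 := Submodule.liftQ (KLsub (mcOp M lam1 h1) lam2) (PsiBar M lam1 lam2) hker
    with hT0def
  have hT0mk : ∀ b : Fin r → Fin r → V,
      T0 (Submodule.Quotient.mk (fun i => Submodule.Quotient.mk (b i)))
        = Submodule.Quotient.mk (fun i => rowRho M lam1 i (b i)) := by
    intro b
    rw [hT0def, Submodule.liftQ_apply, PsiBar_mk]
  -- surjectivity
  have hsurj : Function.Surjective T0 := by
    intro z
    obtain ⟨w, rfl⟩ := Submodule.Quotient.mk_surjective _ z
    choose b hb using fun i => rowRho_surjective hstarstar hlam1 i (w i)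
    refine ⟨Submodule.Quotient.mk (fun i => Submodule.Quotient.mk (b i)), ?_⟩
    rw [hT0mk]
    congr 1
    exact funext hb
  -- injectivity
  have hinj : Function.Injective T0 := by
    refine LinearMap.ker_eq_bot.1 (LinearMap.ker_eq_bot'.2 fun z hz => ?_)
    obtain ⟨y, rfl⟩ := Submodule.Quotient.mk_surjective _ z
    obtain ⟨b, rfl⟩ := hQmk y
    rw [hT0mk, Submodule.Quotient.mk_eq_zero] at hz
    obtain ⟨κ, ℓ, hκ, hℓ, hg⟩ := (mem_KLsub_iff M (lam1 * lam2) _).1 hz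
    -- construct the pre-image of the `L_λ`-part
    obtain ⟨b'', hb''i, hb''ii⟩ : ∃ b'' : Fin r → Fin r → V,
        (∀ i, rowRho M lam1 i (b'' i) = ℓ i) ∧
        (∀ k, rowRho (fun j => convOp M lam1 j) lam2 k b'' ∈ KLsub M lam1) := by
      rcases eq_or_ne lam2 1 with rfl | hlam2ne
      · -- λ₂ = 1 : choose arbitrary lifts along the surjective rows
        choose c hc using fun i => rowRho_surjective hstarstar hlam1 i (ℓ i)
        refine ⟨c, hc, fun k => ?_⟩
        have hterm' : ∀ j, convOp M lam1 j (c j) - c j = Pi.single j (ℓ j) := fun j => by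
          rw [convOp_sub_self, hc j]
        have hNk' : convOp M lam1 k (c k) = c k + Pi.single k (ℓ k) := by
          rw [convOp_apply, hc k]
        have hval : rowRho (fun j => convOp M lam1 j) 1 k c = ℓ := by
          rw [rowRho_split (fun j => convOp M lam1 j) 1 k c]
          simp only [hterm']
          rw [hNk', one_smul, one_smul]
          conv_rhs => rw [← Finset.univ_sum_single ℓ, sum_split k]
          abel
        rw [hval]
        refine Submodule.mem_sup_right ((mem_Lsub_iff M lam1 ℓ).2 fun j => ?_)
        have h4 := hℓ j
        rwa [mul_one] at h4
      · -- λ₂ ≠ 1 : the explicit formula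
        have hs2 : (1 : ℂ) - lam2 ≠ 0 := sub_ne_zero.mpr (Ne.symm hlam2ne)
        have hii : ∀ i, rowRho M lam1 i (((1 - lam2)⁻¹ - 1) • ℓ
            + ∑ j ∈ Finset.univ.filter (fun j => j < i), Pi.single j (ℓ j)) = ℓ i := by
          intro i
          have hcon := hℓ i
          rw [rowRho_split M (lam1 * lam2) i ℓ] at hcon
          rw [map_add, map_smul, rowRho_split M lam1 i ℓ, map_sum,
            Finset.sum_congr rfl
              (fun j hj => rowRho_single_lt M lam1 (Finset.mem_filter.1 hj).2 (ℓ j))]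
          generalize hD : M i (ℓ i) = D at hcon ⊢
          generalize hS1 : ∑ j ∈ Finset.univ.filter (fun j => j < i), (M j (ℓ j) - ℓ j) = P
            at hcon ⊢
          generalize hS2 : ∑ j ∈ Finset.univ.filter (fun j => i < j), (M j (ℓ j) - ℓ j) = T
            at hcon ⊢
          have h4 : P + (((lam1 * lam2) • D - ℓ i) + (lam1 * lam2) • T) = 0 := by
            rw [← add_assoc]; exact hcon
          have h5 : P = -(((lam1 * lam2) • D - ℓ i) + (lam1 * lam2) • T) :=
            eq_neg_of_add_eq_zero_left h4
          rw [h5]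
          match_scalars <;> field_simp <;> ring
        refine ⟨fun i => ((1 - lam2)⁻¹ - 1) • ℓ
          + ∑ j ∈ Finset.univ.filter (fun j => j < i), Pi.single j (ℓ j), hii, ?_⟩
        intro k
        have hterm' : ∀ j, convOp M lam1 j (((1 - lam2)⁻¹ - 1) • ℓ
            + ∑ j' ∈ Finset.univ.filter (fun j' => j' < j), Pi.single j' (ℓ j'))
            - (((1 - lam2)⁻¹ - 1) • ℓ
            + ∑ j' ∈ Finset.univ.filter (fun j' => j' < j), Pi.single j' (ℓ j'))
            = Pi.single j (ℓ j) := fun j => by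
          rw [convOp_sub_self, hii j]
        have hNk' : convOp M lam1 k (((1 - lam2)⁻¹ - 1) • ℓ
            + ∑ j' ∈ Finset.univ.filter (fun j' => j' < k), Pi.single j' (ℓ j'))
            = (((1 - lam2)⁻¹ - 1) • ℓ
            + ∑ j' ∈ Finset.univ.filter (fun j' => j' < k), Pi.single j' (ℓ j'))
            + Pi.single k (ℓ k) := by
          rw [convOp_apply, hii k]
        have hzero : rowRho (fun j => convOp M lam1 j) lam2 k (fun i =>
            ((1 - lam2)⁻¹ - 1) • ℓ
              + ∑ j ∈ Finset.univ.filter (fun j => j < i), Pi.single j (ℓ j)) = 0 := by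
          rw [rowRho_split (fun j => convOp M lam1 j) lam2 k _]
          simp only [hterm']
          rw [hNk']
          have hldecomp : ℓ = (∑ j ∈ Finset.univ.filter (fun j => j < k), Pi.single j (ℓ j))
              + Pi.single k (ℓ k)
              + ∑ j ∈ Finset.univ.filter (fun j => k < j), Pi.single j (ℓ j) := by
            conv_lhs => rw [← Finset.univ_sum_single ℓ]
            exact sum_split k _
          generalize hH : (∑ j ∈ Finset.univ.filter (fun j => j < k),
              Pi.single j (ℓ j) : Fin r → V) = H at hldecomp ⊢
          generalize hSS : (Pi.single k (ℓ k) : Fin r → V) = S at hldecomp ⊢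
          generalize hG : (∑ j ∈ Finset.univ.filter (fun j => k < j),
              Pi.single j (ℓ j) : Fin r → V) = G at hldecomp ⊢
          rw [hldecomp]
          match_scalars <;> field_simp <;> ring
        rw [hzero]
        exact Submodule.zero_mem _
    -- assemble the membership
    have he : ∀ i, rowRho M lam1 i (b i - b'' i) = κ i := by
      intro i
      have h6 := congrFun hg i
      simp only [Pi.add_apply] at h6
      rw [map_sub, hb''i i, h6, add_sub_cancel_right]
    rw [Submodule.Quotient.mk_eq_zero]
    have hxdecomp : (fun i => (Submodule.Quotient.mk (b i) :
        (Fin r → V) ⧸ KLsub M lam1))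
        = (fun i => Submodule.Quotient.mk (b i - b'' i))
          + (fun i => Submodule.Quotient.mk (b'' i)) := by
      funext i
      rw [Pi.add_apply, ← Submodule.Quotient.mk_add, sub_add_cancel]
    rw [hxdecomp]
    refine Submodule.add_mem _ (Submodule.mem_sup_left ?_) (Submodule.mem_sup_right ?_)
    · refine (mem_iSup_Ksub (mcOp M lam1 h1) _).2 fun j => ?_
      show mcOp M lam1 h1 j (Submodule.Quotient.mk (b j - b'' j))
        = Submodule.Quotient.mk (b j - b'' j)
      rw [mcOp_mk]
      refine (Submodule.Quotient.eq _).2 ?_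
      rw [convOp_sub_self, he j]
      exact single_fixed_mem M lam1 (hκ j)
    · refine (mem_Lsub_iff (mcOp M lam1 h1) lam2 _).2 fun k => ?_
      rw [rowRho_mcOp_mk M lam1 lam2 h1 b'' k, Submodule.Quotient.mk_eq_zero]
      exact hb''ii k
  refine ⟨LinearEquiv.ofBijective T0 ⟨hinj, hsurj⟩, fun k x => ?_⟩
  obtain ⟨y, rfl⟩ := Submodule.Quotient.mk_surjective _ x
  obtain ⟨b, rfl⟩ := hQmk y
  have hTeq : ∀ z, (LinearEquiv.ofBijective T0 ⟨hinj, hsurj⟩) z = T0 z := fun z => rfl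
  rw [mcOp_mk (mcOp M lam1 h1) lam2 h2, convOp_mcOp_mk M lam1 lam2 h1 b k, hTeq, hTeq, hT0mk, hT0mk,
    mcOp_mk M (lam1 * lam2) h12]
  exact congrArg Submodule.Quotient.mk (psi_intertwine M lam1 lam2 b k)
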